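/- Let N_i ∈ ℝ and c > 0, and define Ṽ(N) = -(c/20)e^{4N} - (c/5)e^{5N_i - N} + (c/4)e^{4N_i} + 1. Then Ṽ is a solution of the second-order ODE Ṽ''(N) + Ṽ'(N) = -c·e^{4N} for all N, with initial conditions Ṽ(N_i) = 1 and Ṽ'(N_i) = 0. -/

import Mathlib

/-- The radiation-era solution of the localized Klein–Gordon equation of the
VAAS model: Ṽ(N) = -(c/20)e^{4N} - (c/5)e^{5N_i - N} + (c/4)e^{4N_i} + 1
solves Ṽ'' + Ṽ' = -c·e^{4N} with Ṽ(N_i) = 1 and Ṽ'(N_i) = 0. -/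
theorem stmt10 (Ni c : ℝ) (hc : 0 < c) :
    let V : ℝ → ℝ := fun N =>
      -(c/20)*Real.exp (4*N) - (c/5)*Real.exp (5*Ni - N) + (c/4)*Real.exp (4*Ni) + 1
    (∀ N, deriv (deriv V) N + deriv V N = -c * Real.exp (4*N)) ∧
    V Ni = 1 ∧ deriv V Ni = 0 := by
  intro V
  have hd : ∀ N, HasDerivAt V (-(c/5)*Real.exp (4*N) + (c/5)*Real.exp (5*Ni - N)) N := by
    intro N
    have h1 : HasDerivAt (fun N : ℝ => Real.exp (4*N)) (Real.exp (4*N) * 4) N := by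
      have := (Real.hasDerivAt_exp (4*N)).comp N ((hasDerivAt_id N).const_mul 4)
      simpa [Function.comp_def] using this
    have h2 : HasDerivAt (fun N : ℝ => Real.exp (5*Ni - N)) (Real.exp (5*Ni - N) * (-1)) N := by
      have := (Real.hasDerivAt_exp (5*Ni - N)).comp N
        ((hasDerivAt_const N (5*Ni)).sub (hasDerivAt_id N))
      simpa [Function.comp_def] using this
    have := (((h1.const_mul (-(c/20))).sub (h2.const_mul (c/5))).add_const
      ((c/4)*Real.exp (4*Ni))).add_const 1
    refine this.congr_deriv ?_
    ring
  have hderiv : deriv V = fun N => -(c/5)*Real.exp (4*N) + (c/5)*Real.exp (5*Ni - N) :=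
    funext fun N => (hd N).deriv
  have hd2 : ∀ N, HasDerivAt (deriv V) (-(4*c/5)*Real.exp (4*N) - (c/5)*Real.exp (5*Ni - N)) N := by
    intro N
    rw [hderiv]
    have h1 : HasDerivAt (fun N : ℝ => Real.exp (4*N)) (Real.exp (4*N) * 4) N := by
      have := (Real.hasDerivAt_exp (4*N)).comp N ((hasDerivAt_id N).const_mul 4)
      simpa [Function.comp_def] using this
    have h2 : HasDerivAt (fun N : ℝ => Real.exp (5*Ni - N)) (Real.exp (5*Ni - N) * (-1)) N := by
      have := (Real.hasDerivAt_exp (5*Ni - N)).comp N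
        ((hasDerivAt_const N (5*Ni)).sub (hasDerivAt_id N))
      simpa [Function.comp_def] using this
    have := (h1.const_mul (-(c/5))).add (h2.const_mul (c/5))
    refine this.congr_deriv ?_
    ring
  refine ⟨fun N => ?_, ?_, ?_⟩
  · rw [(hd2 N).deriv, hderiv]
    ring
  · show -(c/20)*Real.exp (4*Ni) - (c/5)*Real.exp (5*Ni - Ni) + (c/4)*Real.exp (4*Ni) + 1 = 1
    have : 5*Ni - Ni = 4*Ni := by ring
    rw [this]; ring
  · rw [hderiv]
    have : 5*Ni - Ni = 4*Ni := by ring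
    simp only [this]; ring
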